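/- arXiv:2204.02503 — 2 statements merged into one kernel-verified Lean document; each statement's English description precedes it below -/
import Mathlib

section
/- Let k ≥ 1 and let S be a k-pseudomanifold. Then S is a simplicial k-circuit. -/
/-! ### Simplicial multicomplexes over the vertex type ℕ -/

/-- The vertex set of a simplicial multicomplex: the union of its simplices. -/
def vertexSet (S : Multiset (Finset ℕ)) : Finset ℕ := S.toFinset.sup id

lemma mem_vertexSet_of_mem {S : Multiset (Finset ℕ)} {U : Finset ℕ} {x : ℕ}
    (hU : U ∈ S) (hx : x ∈ U) : x ∈ vertexSet S :=
  Finset.mem_of_subset (Finset.le_sup (f := id) (Multiset.mem_toFinset.2 hU)) hx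

/-- The number of simplices of `S` containing `F`, counted with multiplicity. -/
def simplexCount (S : Multiset (Finset ℕ)) (F : Finset ℕ) : ℕ :=
  Multiset.countP (fun U => F ⊆ U) S

/-- `S` is a simplicial `k`-multicomplex: all its members are `(k+1)`-element sets. -/
def IsMultiComplex (k : ℕ) (S : Multiset (Finset ℕ)) : Prop :=
  ∀ U ∈ S, U.card = k + 1

/-- The boundary of `S`: all `k`-element sets lying in an odd number of simplices of `S`,
counted with multiplicity. -/
def boundarySet (k : ℕ) (S : Multiset (Finset ℕ)) : Set (Finset ℕ) :=
  {F | F.card = k ∧ Odd (simplexCount S F)}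

/-- A simplicial `k`-cycle: a simplicial `k`-multicomplex with empty boundary. -/
def IsSimpCycle (k : ℕ) (S : Multiset (Finset ℕ)) : Prop :=
  IsMultiComplex k S ∧ ∀ F : Finset ℕ, F.card = k → Even (simplexCount S F)

/-- A simplicial `k`-circuit: a nonempty simplicial `k`-cycle, no proper nonempty
sub-multiset of which is a simplicial `k`-cycle. -/
def IsSimpCircuit (k : ℕ) (S : Multiset (Finset ℕ)) : Prop :=
  IsSimpCycle k S ∧ S ≠ 0 ∧
    ∀ T : Multiset (Finset ℕ), T ≤ S → T ≠ 0 → T ≠ S → ¬ IsSimpCycle k T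

/-- A trivial simplicial circuit consists of two copies of a single simplex. -/
def IsTrivialSimpCircuit (S : Multiset (Finset ℕ)) : Prop :=
  ∃ U : Finset ℕ, S = {U, U}

/-- Symmetric difference of multisets (for multisets with no repeated members this is the
usual symmetric difference of sets). -/
def symmDiffM (S T : Multiset (Finset ℕ)) : Multiset (Finset ℕ) := (S - T) + (T - S)

/-- Contraction of the vertex `v` onto the vertex `u`: delete every simplex containing both
`u` and `v`, and replace every simplex `U` containing `v` but not `u` by `(U∖{v})∪{u}`. -/
def contractS (S : Multiset (Finset ℕ)) (u v : ℕ) : Multiset (Finset ℕ) :=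
  (S.filter fun U => ¬ (u ∈ U ∧ v ∈ U)).map fun U =>
    if v ∈ U then insert u (U.erase v) else U

/-- The link of an edge `uv` of `S`. -/
def linkS (S : Multiset (Finset ℕ)) (u v : ℕ) : Multiset (Finset ℕ) :=
  (S.filter fun U => u ∈ U ∧ v ∈ U).map fun U => U \ {u, v}

/-- `S` is strongly connected: any two simplices are joined by a sequence of simplices of `S`
in which consecutive simplices share at least `k` vertices. -/
def StronglyConnectedS (k : ℕ) (S : Multiset (Finset ℕ)) : Prop :=
  ∀ U ∈ S, ∀ W ∈ S,
    Relation.ReflTransGen (fun A B => A ∈ S ∧ B ∈ S ∧ k ≤ (A ∩ B).card) U W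

/-- A `k`-pseudomanifold: a nonempty strongly connected simplicial `k`-complex in which every
`k`-element subset of a simplex is contained in exactly two simplices. -/
def IsPseudomanifold (k : ℕ) (S : Multiset (Finset ℕ)) : Prop :=
  S.Nodup ∧ IsMultiComplex k S ∧ S ≠ 0 ∧ StronglyConnectedS k S ∧
    ∀ F : Finset ℕ, F.card = k → (∃ U ∈ S, F ⊆ U) → simplexCount S F = 2

/-- Stacked `k`-spheres: obtained from the boundary of a `(k+1)`-simplex by repeated
barycentric subdivisions of facets. -/
inductive IsStackedSphere : ℕ → Multiset (Finset ℕ) → Prop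
  | base (k : ℕ) (W : Finset ℕ) (hW : W.card = k + 2) :
      IsStackedSphere k (W.powersetCard (k + 1)).val
  | subdiv (k : ℕ) (S : Multiset (Finset ℕ)) (U : Finset ℕ) (w : ℕ)
      (hS : IsStackedSphere k S) (hU : U ∈ S) (hw : w ∉ vertexSet S) :
      IsStackedSphere k (symmDiffM S ((insert w U).powersetCard (k + 1)).val)

/-- `S` is a copy of the simplicial `k`-circuit `ℒ_k`. -/
def IsCopyOfL (k : ℕ) (S : Multiset (Finset ℕ)) : Prop :=
  ∃ (U : Finset ℕ) (x y : ℕ), U.card = k + 1 ∧ x ∉ U ∧ y ∉ U ∧ x ≠ y ∧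
    vertexSet S = U ∪ {x, y} ∧
    S = ((U.image fun w => insert x (U.erase w)) ∪ (U.image fun w => insert y (U.erase w))).val

open scoped Classical in
/-- The family `S†`: all `(k+1)`-element subsets `K` of `V(S)` containing `u` and `v` such
that both `K∖{u}` and `K∖{v}` are contained in some simplex of `S`. -/
noncomputable def faceDag (k : ℕ) (S : Multiset (Finset ℕ)) (u v : ℕ) : Multiset (Finset ℕ) :=
  ((vertexSet S).powersetCard (k + 1)).val.filter fun K =>
    u ∈ K ∧ v ∈ K ∧ (∃ U ∈ S, K.erase u ⊆ U) ∧ (∃ U ∈ S, K.erase v ⊆ U)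

open scoped Classical in
/-- The family `S*`: the members `K` of `S†` with `K∖{u}` and `K∖{v}` in the boundary of `S`. -/
noncomputable def faceStar (k : ℕ) (S : Multiset (Finset ℕ)) (u v : ℕ) : Multiset (Finset ℕ) :=
  (faceDag k S u v).filter fun K =>
    K.erase u ∈ boundarySet k S ∧ K.erase v ∈ boundarySet k S

/-! ### Finite graphs with vertices in ℕ -/

/-- A finite simple graph with vertex set a finite subset of `ℕ`. -/
structure FinGraph : Type where
  verts : Finset ℕ
  Adj : ℕ → ℕ → Prop
  symm : ∀ ⦃x y⦄, Adj x y → Adj y x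
  loopless : ∀ x, ¬ Adj x x
  adj_mem : ∀ ⦃x y⦄, Adj x y → x ∈ verts ∧ y ∈ verts

namespace FinGraph

/-- The number of edges of `G`. -/
noncomputable def edgeCount (G : FinGraph) : ℕ := (Sym2.fromRel (⟨fun _ _ h => G.symm h⟩ : Std.Symm G.Adj)).ncard

/-- `G` is connected. -/
def Connected (G : FinGraph) : Prop :=
  G.verts.Nonempty ∧ ∀ x ∈ G.verts, ∀ y ∈ G.verts, Relation.ReflTransGen G.Adj x y

/-- Deletion of a set of vertices. -/
def deleteVerts (G : FinGraph) (K : Finset ℕ) : FinGraph where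
  verts := G.verts \ K
  Adj x y := G.Adj x y ∧ x ∉ K ∧ y ∉ K
  symm := by
    rintro x y ⟨h, hx, hy⟩
    exact ⟨G.symm h, hy, hx⟩
  loopless := by
    rintro x ⟨h, -, -⟩
    exact G.loopless x h
  adj_mem := by
    rintro x y ⟨h, hx, hy⟩
    exact ⟨Finset.mem_sdiff.2 ⟨(G.adj_mem h).1, hx⟩, Finset.mem_sdiff.2 ⟨(G.adj_mem h).2, hy⟩⟩

/-- `G` is `m`-connected: it has at least `m+1` vertices and deleting any set of fewer than
`m` vertices leaves a connected graph. -/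
def ConnectedGE (m : ℕ) (G : FinGraph) : Prop :=
  m + 1 ≤ G.verts.card ∧ ∀ K : Finset ℕ, K.card < m → (G.deleteVerts K).Connected

/-- `G` is a complete graph on `n` vertices. -/
def IsCompleteOn (G : FinGraph) (n : ℕ) : Prop :=
  G.verts.card = n ∧ ∀ x ∈ G.verts, ∀ y ∈ G.verts, x ≠ y → G.Adj x y

/-- `H` is a subgraph of `G`. -/
def IsSubgraph (H G : FinGraph) : Prop :=
  H.verts ⊆ G.verts ∧ ∀ ⦃x y⦄, H.Adj x y → G.Adj x y

/-- `X` is a clique of `G`. -/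
def IsClique (G : FinGraph) (X : Finset ℕ) : Prop :=
  X ⊆ G.verts ∧ ∀ x ∈ X, ∀ y ∈ X, x ≠ y → G.Adj x y

/-- The union of two graphs. -/
def union (G H : FinGraph) : FinGraph where
  verts := G.verts ∪ H.verts
  Adj x y := G.Adj x y ∨ H.Adj x y
  symm := by
    rintro x y (h | h)
    exacts [Or.inl (G.symm h), Or.inr (H.symm h)]
  loopless := by
    rintro x (h | h)
    exacts [G.loopless x h, H.loopless x h]
  adj_mem := by
    rintro x y (h | h)
    · exact ⟨Finset.mem_union_left _ (G.adj_mem h).1, Finset.mem_union_left _ (G.adj_mem h).2⟩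
    · exact ⟨Finset.mem_union_right _ (H.adj_mem h).1, Finset.mem_union_right _ (H.adj_mem h).2⟩

/-- Adding the edge `uv` to `G` (for vertices `u ≠ v` of `G`). -/
def addEdge (G : FinGraph) (u v : ℕ) : FinGraph where
  verts := G.verts
  Adj x y := G.Adj x y ∨
    (x ≠ y ∧ x ∈ G.verts ∧ y ∈ G.verts ∧ ((x = u ∧ y = v) ∨ (x = v ∧ y = u)))
  symm := by
    rintro x y (h | ⟨hxy, hx, hy, h | h⟩)
    · exact Or.inl (G.symm h)
    · exact Or.inr ⟨hxy.symm, hy, hx, Or.inr ⟨h.2, h.1⟩⟩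
    · exact Or.inr ⟨hxy.symm, hy, hx, Or.inl ⟨h.2, h.1⟩⟩
  loopless := by
    rintro x (h | ⟨hxx, -⟩)
    · exact G.loopless x h
    · exact hxx rfl
  adj_mem := by
    rintro x y (h | ⟨-, hx, hy, -⟩)
    · exact G.adj_mem h
    · exact ⟨hx, hy⟩

/-- Adding a set `B` of unordered pairs of vertices to `G` as edges. -/
def addEdges (G : FinGraph) (B : Finset (Sym2 ℕ)) : FinGraph where
  verts := G.verts
  Adj x y := G.Adj x y ∨ (x ≠ y ∧ x ∈ G.verts ∧ y ∈ G.verts ∧ s(x, y) ∈ B)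
  symm := by
    rintro x y (h | ⟨hxy, hx, hy, hB⟩)
    · exact Or.inl (G.symm h)
    · exact Or.inr ⟨hxy.symm, hy, hx, by rwa [Sym2.eq_swap]⟩
  loopless := by
    rintro x (h | ⟨hxx, -⟩)
    · exact G.loopless x h
    · exact hxx rfl
  adj_mem := by
    rintro x y (h | ⟨-, hx, hy, -⟩)
    · exact G.adj_mem h
    · exact ⟨hx, hy⟩

/-- Deleting the edge `uv` from `G`. -/
def deleteEdge (G : FinGraph) (u v : ℕ) : FinGraph where
  verts := G.verts
  Adj x y := G.Adj x y ∧ ¬ ((x = u ∧ y = v) ∨ (x = v ∧ y = u))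
  symm := by
    rintro x y ⟨h, hne⟩
    refine ⟨G.symm h, fun hc => hne ?_⟩
    rcases hc with ⟨h1, h2⟩ | ⟨h1, h2⟩
    · exact Or.inr ⟨h2, h1⟩
    · exact Or.inl ⟨h2, h1⟩
  loopless := by
    rintro x ⟨h, -⟩
    exact G.loopless x h
  adj_mem := by
    rintro x y ⟨h, -⟩
    exact G.adj_mem h

/-- The contraction `G/uv`: delete `v` and join `u` to every former neighbour of `v`
other than `u`. -/
def contract (G : FinGraph) (u v : ℕ) : FinGraph where
  verts := G.verts.erase v
  Adj x y := x ≠ y ∧ x ∈ G.verts ∧ y ∈ G.verts ∧ x ≠ v ∧ y ≠ v ∧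
    (G.Adj x y ∨ (x = u ∧ G.Adj v y) ∨ (y = u ∧ G.Adj v x))
  symm := by
    rintro x y ⟨hxy, hx, hy, hxv, hyv, h⟩
    refine ⟨hxy.symm, hy, hx, hyv, hxv, ?_⟩
    rcases h with h | h | h
    · exact Or.inl (G.symm h)
    · exact Or.inr (Or.inr h)
    · exact Or.inr (Or.inl h)
  loopless := by
    rintro x ⟨hxx, -⟩
    exact hxx rfl
  adj_mem := by
    rintro x y ⟨hxy, hx, hy, hxv, hyv, -⟩
    exact ⟨Finset.mem_erase.2 ⟨hxv, hx⟩, Finset.mem_erase.2 ⟨hyv, hy⟩⟩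

/-! ### Rigidity notions -/

/-- A realisation of `G` in `ℝ^d` is generic if the coordinates of the positions of the
vertices of `G` are algebraically independent over `ℚ`. -/
def IsGeneric (d : ℕ) (G : FinGraph) (p : ℕ → EuclideanSpace ℝ (Fin d)) : Prop :=
  AlgebraicIndependent ℚ fun vi : {x // x ∈ G.verts} × Fin d => p vi.1.1 vi.2

/-- `q` is an infinitesimal motion of `(G, p)`. -/
def IsInfMotion (d : ℕ) (G : FinGraph) (p q : ℕ → EuclideanSpace ℝ (Fin d)) : Prop :=
  ∀ ⦃x y⦄, G.Adj x y → inner ℝ (q x - q y) (p x - p y) = (0 : ℝ)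

/-- `q` is a trivial motion of `(G, p)`: it agrees on the vertices of `G` with a map of the
form `v ↦ A (p v) + b` with `A` skew-symmetric. -/
def IsTrivialMotion (d : ℕ) (G : FinGraph) (p q : ℕ → EuclideanSpace ℝ (Fin d)) : Prop :=
  ∃ (A : EuclideanSpace ℝ (Fin d) →ₗ[ℝ] EuclideanSpace ℝ (Fin d))
    (b : EuclideanSpace ℝ (Fin d)),
      (∀ x y : EuclideanSpace ℝ (Fin d), (inner ℝ (A x) y : ℝ) = -(inner ℝ x (A y) : ℝ)) ∧
        ∀ v ∈ G.verts, q v = A (p v) + b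

/-- `(G, p)` is infinitesimally rigid. -/
def IsInfRigid (d : ℕ) (G : FinGraph) (p : ℕ → EuclideanSpace ℝ (Fin d)) : Prop :=
  ∀ q : ℕ → EuclideanSpace ℝ (Fin d), IsInfMotion d G p q → IsTrivialMotion d G p q

/-- `G` is rigid in `ℝ^d`: every generic realisation is infinitesimally rigid. -/
def IsRigid (d : ℕ) (G : FinGraph) : Prop :=
  ∀ p : ℕ → EuclideanSpace ℝ (Fin d), G.IsGeneric d p → G.IsInfRigid d p

/-- Two realisations are equivalent if corresponding edges have equal lengths. -/
def Equivalent (d : ℕ) (G : FinGraph) (p q : ℕ → EuclideanSpace ℝ (Fin d)) : Prop :=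
  ∀ ⦃x y⦄, G.Adj x y → ‖p x - p y‖ = ‖q x - q y‖

/-- Two realisations are congruent if all pairs of vertices are at equal distances. -/
def Congruent (d : ℕ) (G : FinGraph) (p q : ℕ → EuclideanSpace ℝ (Fin d)) : Prop :=
  ∀ x ∈ G.verts, ∀ y ∈ G.verts, ‖p x - p y‖ = ‖q x - q y‖

/-- `G` is globally rigid in `ℝ^d`. -/
def IsGloballyRigid (d : ℕ) (G : FinGraph) : Prop :=
  ∀ p q : ℕ → EuclideanSpace ℝ (Fin d),
    G.IsGeneric d p → G.Equivalent d p q → G.Congruent d p q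

/-- `G` is `uv`-coincident rigid in `ℝ^d`: some realisation with `p u = p v` is
infinitesimally rigid. -/
def IsCoincidentRigid (d : ℕ) (G : FinGraph) (u v : ℕ) : Prop :=
  ∃ p : ℕ → EuclideanSpace ℝ (Fin d), p u = p v ∧ G.IsInfRigid d p

end FinGraph

/-- The graph `G(S)` of a simplicial multicomplex `S`. -/
def graphOf (S : Multiset (Finset ℕ)) : FinGraph where
  verts := vertexSet S
  Adj x y := x ≠ y ∧ ∃ U ∈ S, x ∈ U ∧ y ∈ U
  symm := by
    rintro x y ⟨hxy, U, hU, hx, hy⟩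
    exact ⟨hxy.symm, U, hU, hy, hx⟩
  loopless := by
    rintro x ⟨hxx, -⟩
    exact hxx rfl
  adj_mem := by
    rintro x y ⟨hxy, U, hU, hx, hy⟩
    exact ⟨mem_vertexSet_of_mem hU hx, mem_vertexSet_of_mem hU hy⟩

/-! ### Cleavage properties -/

/-- The `d`-cleavage property: `G` is `d`-connected and every `d`-element vertex set whose
removal disconnects `G` induces a clique of `G`. -/
def HasCleavage (d : ℕ) (G : FinGraph) : Prop :=
  G.ConnectedGE d ∧ ∀ X : Finset ℕ, X ⊆ G.verts → X.card = d →
    ¬ (G.deleteVerts X).Connected → G.IsClique X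

/-- A `(d+1)`-block of `G`: a subgraph that is a complete graph on `d+1` vertices or is
`(d+1)`-connected, and is maximal among subgraphs of `G` with this property. -/
def IsBlock (d : ℕ) (G D : FinGraph) : Prop :=
  D.IsSubgraph G ∧ (D.IsCompleteOn (d + 1) ∨ D.ConnectedGE (d + 1)) ∧
    ∀ D' : FinGraph, D'.IsSubgraph G → (D'.IsCompleteOn (d + 1) ∨ D'.ConnectedGE (d + 1)) →
      D.IsSubgraph D' → D' = D

/-- The strong `d`-cleavage property (for `d ≥ 4`): the `d`-cleavage property, and every
`(d+1)`-block is globally rigid in `ℝ^d`. -/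
def HasStrongCleavage (d : ℕ) (G : FinGraph) : Prop :=
  HasCleavage d G ∧ ∀ D : FinGraph, IsBlock d G D → D.IsGloballyRigid d

/-- A reflexive-transitive path starting inside `T` and ending outside `T` must cross. -/
lemma crossing_pair {α : Type*} {R : α → α → Prop} {T : Set α} {W U : α}
    (h : Relation.ReflTransGen R W U) (hW : W ∈ T) (hU : U ∉ T) :
    ∃ A ∈ T, ∃ B, B ∉ T ∧ R A B := by
  induction h with
  | refl => exact absurd hW hU
  | tail _ hbc ih =>
    rename_i b c _
    by_cases hb : b ∈ T
    · exact ⟨b, hb, c, hU, hbc⟩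
    · exact ih hb

theorem pseudomanifold_isCircuit (k : ℕ) (hk : 1 ≤ k)
    (S : Multiset (Finset ℕ)) (hS : IsPseudomanifold k S) :
    IsSimpCircuit k S := by
  classical
  obtain ⟨hnd, hmc, hne, hsc, hcount⟩ := hS
  have hcycle : IsSimpCycle k S := by
    refine ⟨hmc, fun F hF => ?_⟩
    by_cases h : ∃ U ∈ S, F ⊆ U
    · rw [hcount F hF h]; exact even_two
    · have : simplexCount S F = 0 := by
        simp only [simplexCount, Multiset.countP_eq_zero]
        intro U hU hFU
        exact h ⟨U, hU, hFU⟩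
      rw [this]; exact Even.zero
  refine ⟨hcycle, hne, fun T hTS hT0 hTne hTcyc => ?_⟩
  -- there is a simplex of S not in T
  obtain ⟨U, hUS, hUT⟩ : ∃ U ∈ S, U ∉ T := by
    by_contra h
    push_neg at h
    exact hTne (le_antisymm hTS ((Multiset.le_iff_subset hnd).2 h))
  obtain ⟨W, hWT⟩ := Multiset.exists_mem_of_ne_zero hT0
  have hWS : W ∈ S := Multiset.mem_of_le hTS hWT
  -- find a crossing pair A ∈ T, B ∉ T adjacent
  obtain ⟨A, hAT, B, hBT, hAS, hBS, hcard⟩ :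
      ∃ A, A ∈ T ∧ ∃ B, B ∉ T ∧ A ∈ S ∧ B ∈ S ∧ k ≤ (A ∩ B).card := by
    obtain ⟨A, hAT, B, hBT, hR⟩ :=
      crossing_pair (T := {X | X ∈ T}) (hsc W hWS U hUS) hWT hUT
    exact ⟨A, hAT, B, hBT, hR.1, hR.2.1, hR.2.2⟩
  -- choose F ⊆ A ∩ B with card k
  obtain ⟨F, hFsub, hFcard⟩ := Finset.exists_subset_card_eq hcard
  have hFA : F ⊆ A := hFsub.trans Finset.inter_subset_left
  have hFB : F ⊆ B := hFsub.trans Finset.inter_subset_right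
  -- counts
  have hsum : simplexCount T F + simplexCount (S - T) F = 2 := by
    have : simplexCount T F + simplexCount (S - T) F = simplexCount S F := by
      rw [simplexCount, simplexCount, simplexCount, ← Multiset.countP_add,
        add_tsub_cancel_of_le hTS]
    rw [this]
    exact hcount F hFcard ⟨A, hAS, hFA⟩
  have hT1 : 0 < simplexCount T F :=
    Multiset.countP_pos.2 ⟨A, hAT, hFA⟩
  have hB' : B ∈ S - T := by
    rw [← Multiset.count_pos, Multiset.count_sub]
    have h1 : Multiset.count B S = 1 := (Multiset.count_eq_one_of_mem hnd hBS)
    have h0 : Multiset.count B T = 0 := Multiset.count_eq_zero.2 hBT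
    omega
  have hS1 : 0 < simplexCount (S - T) F :=
    Multiset.countP_pos.2 ⟨B, hB', hFB⟩
  have hodd : simplexCount T F = 1 := by omega
  have := hTcyc.2 F hFcard
  rw [hodd] at this
  exact (Nat.not_even_one) this
end

section
/- Let k ≥ 1 and let S be a nonempty simplicial k-cycle with no repeated simplices such that |V(S)| = k+3. Say that S is a copy of ℒ_k if there exist a (k+1)-element set U and distinct vertices x, y not in U such that V(S) = U ∪ {x,y} and S = {(U∖{w})∪{x} : w ∈ U} ∪ {(U∖{w})∪{y} : w ∈ U}. Then: if k ≤ 2, S is a copy of ℒ_k; and if k ≥ 3, either G(S) is a complete graph on k+3 vertices or S is a copy of ℒ_k. -/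
/-! ### Auxiliary lemmas for the main theorem -/

lemma aux_subset_vertexSet {S : Multiset (Finset ℕ)} {U : Finset ℕ} (hU : U ∈ S) :
    U ⊆ vertexSet S := fun _ hx => mem_vertexSet_of_mem hU hx

lemma aux_exists_mem {S : Multiset (Finset ℕ)} {v : ℕ} (hv : v ∈ vertexSet S) :
    ∃ U ∈ S, v ∈ U := by
  simpa [vertexSet, Finset.mem_sup, Multiset.mem_toFinset] using hv

lemma aux_recover {k : ℕ} {S : Multiset (Finset ℕ)} (hS : IsMultiComplex k S)
    (hcard : (vertexSet S).card = k + 3) {U : Finset ℕ} (hU : U ∈ S) :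
    ∃ x y, x ∈ vertexSet S ∧ y ∈ vertexSet S ∧ x ≠ y ∧ U = vertexSet S \ {x, y} := by
  have hUV : U ⊆ vertexSet S := aux_subset_vertexSet hU
  have hU2 : (vertexSet S \ U).card = 2 := by
    rw [Finset.card_sdiff_of_subset hUV, hcard, hS U hU]
    omega
  obtain ⟨x, y, hxy, hP⟩ := Finset.card_eq_two.1 hU2
  have hx : x ∈ vertexSet S \ U := hP ▸ Finset.mem_insert_self x {y}
  have hy : y ∈ vertexSet S \ U := hP ▸ (by simp : y ∈ ({x, y} : Finset ℕ))
  exact ⟨x, y, (Finset.mem_sdiff.1 hx).1, (Finset.mem_sdiff.1 hy).1, hxy,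
    by rw [← hP, Finset.sdiff_sdiff_eq_self hUV]⟩

lemma aux_parity {k : ℕ} {S : Multiset (Finset ℕ)} (hS : IsSimpCycle k S) (hnodup : S.Nodup)
    (hcard : (vertexSet S).card = k + 3)
    {a b c : ℕ} (ha : a ∈ vertexSet S) (hb : b ∈ vertexSet S) (hc : c ∈ vertexSet S)
    (hab : a ≠ b) (hac : a ≠ c) (hbc : b ≠ c) :
    ¬ ((vertexSet S \ {a, b} ∈ S) ↔
        ((vertexSet S \ {b, c} ∈ S) ↔ (vertexSet S \ {a, c} ∈ S))) := by
  classical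
  set V := vertexSet S with hV
  set u1 := V \ {a, b} with hu1
  set u2 := V \ {b, c} with hu2
  set u3 := V \ {a, c} with hu3
  have habc : ({a, b, c} : Finset ℕ) ⊆ V := by
    intro z hz
    simp only [Finset.mem_insert, Finset.mem_singleton] at hz
    rcases hz with rfl | rfl | rfl <;> assumption
  have hc3 : ({a, b, c} : Finset ℕ).card = 3 := by
    rw [Finset.card_insert_of_notMem (by simp [hab, hac]),
      Finset.card_insert_of_notMem (by simp [hbc]), Finset.card_singleton]
  have hF : (V \ {a, b, c}).card = k := by
    rw [Finset.card_sdiff_of_subset habc, hcard, hc3]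
    omega
  have heven := hS.2 _ hF
  have hchar : ∀ U ∈ S, (V \ {a, b, c} ⊆ U ↔ U ∈ ({u1, u2, u3} : Finset (Finset ℕ))) := by
    intro U hU
    constructor
    · intro hFU
      obtain ⟨x, y, hxV, hyV, hxy, hUeq⟩ := aux_recover hS.1 hcard hU
      have hmem2 : ∀ z, z ∈ ({x, y} : Finset ℕ) → z ∈ ({a, b, c} : Finset ℕ) := by
        intro z hz
        by_contra hzn
        have hzV : z ∈ V := by
          simp only [Finset.mem_insert, Finset.mem_singleton] at hz
          rcases hz with rfl | rfl <;> assumption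
        have hzF : z ∈ V \ {a, b, c} := Finset.mem_sdiff.2 ⟨hzV, hzn⟩
        have hzU : z ∈ U := hFU hzF
        rw [hUeq] at hzU
        exact (Finset.mem_sdiff.1 hzU).2 hz
      have hxm := hmem2 x (by simp)
      have hym := hmem2 y (by simp)
      simp only [Finset.mem_insert, Finset.mem_singleton] at hxm hym ⊢
      rcases hxm with rfl | rfl | rfl <;> rcases hym with rfl | rfl | rfl <;>
        first
          | exact absurd rfl hxy
          | (rw [hUeq]
             first
               | exact Or.inl rfl
               | exact Or.inr (Or.inl rfl)
               | exact Or.inr (Or.inr rfl)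
               | (rw [Finset.pair_comm]
                  first
                    | exact Or.inl rfl
                    | exact Or.inr (Or.inl rfl)
                    | exact Or.inr (Or.inr rfl)))
    · intro hUm
      simp only [Finset.mem_insert, Finset.mem_singleton] at hUm
      rcases hUm with rfl | rfl | rfl <;>
        · refine Finset.sdiff_subset_sdiff le_rfl ?_
          intro z hz
          simp only [Finset.mem_insert, Finset.mem_singleton] at hz ⊢
          tauto
  have h12 : u1 ≠ u2 := by
    intro h
    have hcm : c ∈ u1 := Finset.mem_sdiff.2 ⟨hc, by simp [hac.symm, hbc.symm]⟩
    rw [h] at hcm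
    simp [hu2] at hcm
  have h13 : u1 ≠ u3 := by
    intro h
    have hcm : c ∈ u1 := Finset.mem_sdiff.2 ⟨hc, by simp [hac.symm, hbc.symm]⟩
    rw [h] at hcm
    simp [hu3] at hcm
  have h23 : u2 ≠ u3 := by
    intro h
    have ham : a ∈ u2 := Finset.mem_sdiff.2 ⟨ha, by simp [hab, hac]⟩
    rw [h] at ham
    simp [hu3] at ham
  have hcount : simplexCount S (V \ {a, b, c}) =
      ((if u1 ∈ S then 1 else 0) + if u2 ∈ S then 1 else 0) + if u3 ∈ S then 1 else 0 := by
    rw [simplexCount, Multiset.countP_eq_card_filter,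
      ← Multiset.toFinset_card_of_nodup (hnodup.filter _), Multiset.toFinset_filter]
    rw [Finset.filter_congr (fun U hU => hchar U (Multiset.mem_toFinset.1 hU))]
    rw [Finset.filter_mem_eq_inter, Finset.inter_comm, ← Finset.filter_mem_eq_inter]
    rw [Finset.card_filter]
    rw [Finset.sum_insert (by simp [h12, h13]), Finset.sum_insert (by simp [h23]),
      Finset.sum_singleton]
    simp only [Multiset.mem_toFinset]
    ring
  rw [hcount] at heven
  by_cases h1 : u1 ∈ S <;> by_cases h2 : u2 ∈ S <;> by_cases h3 : u3 ∈ S <;>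
    simp only [h1, h2, h3, if_true, if_false, iff_true, iff_false, not_not,
      Nat.even_iff] at heven ⊢ <;> first | omega | tauto

lemma aux_copy (k : ℕ) (S : Multiset (Finset ℕ)) (hnodup : S.Nodup)
    (B : Finset ℕ) (x y : ℕ) (hxy : x ≠ y) (hxB : x ∉ B) (hyB : y ∉ B)
    (hBcard : B.card = k + 1) (hV : vertexSet S = B ∪ {x, y})
    (hmem : ∀ Z, Z ∈ S ↔ ∃ b ∈ B, (Z = vertexSet S \ {x, b} ∨ Z = vertexSet S \ {y, b})) :
    IsCopyOfL k S := by
  classical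
  refine ⟨B, x, y, hBcard, hxB, hyB, hxy, hV, ?_⟩
  have key1 : ∀ b ∈ B, vertexSet S \ {x, b} = insert y (B.erase b) := by
    intro b hb
    have hbx : b ≠ x := fun h => hxB (h ▸ hb)
    have hby : b ≠ y := fun h => hyB (h ▸ hb)
    ext z
    simp only [hV, Finset.mem_sdiff, Finset.mem_union, Finset.mem_insert,
      Finset.mem_singleton, Finset.mem_erase, not_or]
    constructor
    · rintro ⟨hz | rfl | rfl, hzx, hzb⟩
      · exact Or.inr ⟨hzb, hz⟩
      · exact absurd rfl hzx
      · exact Or.inl rfl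
    · rintro (rfl | ⟨hzb, hz⟩)
      · exact ⟨Or.inr (Or.inr rfl), hxy.symm, hby.symm⟩
      · exact ⟨Or.inl hz, fun h => hxB (h ▸ hz), hzb⟩
  have key2 : ∀ b ∈ B, vertexSet S \ {y, b} = insert x (B.erase b) := by
    intro b hb
    have hbx : b ≠ x := fun h => hxB (h ▸ hb)
    have hby : b ≠ y := fun h => hyB (h ▸ hb)
    ext z
    simp only [hV, Finset.mem_sdiff, Finset.mem_union, Finset.mem_insert,
      Finset.mem_singleton, Finset.mem_erase, not_or]
    constructor
    · rintro ⟨hz | rfl | rfl, hzy, hzb⟩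
      · exact Or.inr ⟨hzb, hz⟩
      · exact Or.inl rfl
      · exact absurd rfl hzy
    · rintro (rfl | ⟨hzb, hz⟩)
      · exact ⟨Or.inr (Or.inl rfl), hxy, hbx.symm⟩
      · exact ⟨Or.inl hz, fun h => hyB (h ▸ hz), hzb⟩
  have hSval : S.toFinset.val = S := by
    simp [Multiset.toFinset, Multiset.dedup_eq_self.2 hnodup]
  rw [← hSval]
  congr 1
  ext Z
  rw [Multiset.mem_toFinset, hmem]
  simp only [Finset.mem_union, Finset.mem_image]
  constructor
  · rintro ⟨b, hb, rfl | rfl⟩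
    · exact Or.inr ⟨b, hb, (key1 b hb).symm⟩
    · exact Or.inl ⟨b, hb, (key2 b hb).symm⟩
  · rintro (⟨b, hb, rfl⟩ | ⟨b, hb, rfl⟩)
    · exact ⟨b, hb, Or.inr (key2 b hb).symm⟩
    · exact ⟨b, hb, Or.inl (key1 b hb).symm⟩

theorem cycle_on_k_plus_three_vertices (k : ℕ) (hk : 1 ≤ k)
    (S : Multiset (Finset ℕ)) (hS : IsSimpCycle k S) (hne : S ≠ 0) (hnodup : S.Nodup)
    (hcard : (vertexSet S).card = k + 3) :
    (k ≤ 2 → IsCopyOfL k S) ∧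
      (3 ≤ k → (graphOf S).IsCompleteOn (k + 3) ∨ IsCopyOfL k S) := by
  classical
  set V := vertexSet S with hVdef
  -- the edge relation on V given by complements of simplices
  set E : ℕ → ℕ → Prop := fun x y => V \ {x, y} ∈ S with hEdef
  have hEsymm : ∀ x y, E x y ↔ E y x := by
    intro x y
    rw [hEdef]
    simp only
    rw [Finset.pair_comm]
  have hEirr : ∀ x ∈ V, ¬ E x x := by
    intro x hx hE
    have h1 : ({x, x} : Finset ℕ) = {x} := by simp
    have h2 : (V \ {x, x}).card = k + 1 := hS.1 _ hE
    rw [h1, Finset.card_sdiff_of_subset (by simpa using hx), hcard] at h2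
    simp at h2
  have hP3 : ∀ a b c : ℕ, a ∈ V → b ∈ V → c ∈ V → a ≠ b → a ≠ c → b ≠ c →
      ¬ (E a b ↔ (E b c ↔ E a c)) := by
    intro a b c ha hb hc hab hac hbc
    exact aux_parity hS hnodup hcard ha hb hc hab hac hbc
  obtain ⟨U0, hU0⟩ := Multiset.exists_mem_of_ne_zero hne
  obtain ⟨x0, y0, hx0V, hy0V, hx0y0, hU0eq⟩ := aux_recover hS.1 hcard hU0
  have hE0 : E x0 y0 := by rw [hEdef]; show V \ {x0, y0} ∈ S; simp only [hVdef] at hU0eq ⊢; rw [← hU0eq]; exact hU0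
  set A : Finset ℕ := V.filter (fun z => ¬ E x0 z) with hAdef
  set B : Finset ℕ := V.filter (fun z => E x0 z) with hBdef
  have hx0A : x0 ∈ A := Finset.mem_filter.2 ⟨hx0V, hEirr x0 hx0V⟩
  have hy0B : y0 ∈ B := Finset.mem_filter.2 ⟨hy0V, hE0⟩
  have hAV : ∀ z ∈ A, z ∈ V := fun z hz => (Finset.mem_filter.1 hz).1
  have hBV : ∀ z ∈ B, z ∈ V := fun z hz => (Finset.mem_filter.1 hz).1
  have hdisj : ∀ z, z ∈ A → z ∈ B → False := by
    intro z hzA hzB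
    exact (Finset.mem_filter.1 hzA).2 (Finset.mem_filter.1 hzB).2
  have hsplit : ∀ z ∈ V, z ∈ A ∨ z ∈ B := by
    intro z hz
    by_cases h : E x0 z
    · exact Or.inr (Finset.mem_filter.2 ⟨hz, h⟩)
    · exact Or.inl (Finset.mem_filter.2 ⟨hz, h⟩)
  have hsum : B.card + A.card = k + 3 := by
    rw [hAdef, hBdef, Finset.card_filter_add_card_filter_not, hcard]
  -- no edges within A
  have hAA : ∀ a ∈ A, ∀ a' ∈ A, a ≠ a' → ¬ E a a' := by
    intro a ha a' ha' hne' hE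
    have hna := (Finset.mem_filter.1 ha).2
    have hna' := (Finset.mem_filter.1 ha').2
    by_cases h1 : a = x0
    · exact hna' (h1 ▸ hE)
    · by_cases h2 : a' = x0
      · exact hna (h2 ▸ (hEsymm a a').1 hE)
      · exact hP3 x0 a a' hx0V (hAV a ha) (hAV a' ha') (Ne.symm h1) (Ne.symm h2) hne'
          (by tauto)
  -- no edges within B
  have hBB : ∀ b ∈ B, ∀ b' ∈ B, b ≠ b' → ¬ E b b' := by
    intro b hb b' hb' hne' hE
    have hpb := (Finset.mem_filter.1 hb).2
    have hpb' := (Finset.mem_filter.1 hb').2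
    have h1 : b ≠ x0 := fun h => hEirr x0 hx0V (h ▸ hpb)
    have h2 : b' ≠ x0 := fun h => hEirr x0 hx0V (h ▸ hpb')
    exact hP3 x0 b b' hx0V (hBV b hb) (hBV b' hb') (Ne.symm h1) (Ne.symm h2) hne' (by tauto)
  -- all edges between A and B
  have hABe : ∀ a ∈ A, ∀ b ∈ B, E a b := by
    intro a ha b hb
    have hna := (Finset.mem_filter.1 ha).2
    have hpb := (Finset.mem_filter.1 hb).2
    by_cases h1 : a = x0
    · exact h1 ▸ hpb
    · have hbx0 : b ≠ x0 := fun h => hEirr x0 hx0V (h ▸ hpb)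
      have hab : a ≠ b := fun h => hna (h ▸ hpb)
      have := hP3 x0 a b hx0V (hAV a ha) (hBV b hb) (Ne.symm h1) (Ne.symm hbx0) hab
      tauto
  have hABne : ∀ a ∈ A, ∀ b ∈ B, a ≠ b := by
    intro a ha b hb h
    exact hdisj a ha (h ▸ hb)
  -- characterization of membership in S
  have hmemS : ∀ Z, Z ∈ S ↔ ∃ a ∈ A, ∃ b ∈ B, Z = V \ {a, b} := by
    intro Z
    constructor
    · intro hZ
      obtain ⟨x, y, hxV, hyV, hxy, hZeq⟩ := aux_recover hS.1 hcard hZ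
      have hExy : E x y := by rw [hEdef]; show V \ {x, y} ∈ S; simp only [hVdef] at hZeq ⊢; rw [← hZeq]; exact hZ
      rcases hsplit x hxV with hxA | hxB <;> rcases hsplit y hyV with hyA | hyB
      · exact absurd hExy (hAA x hxA y hyA hxy)
      · exact ⟨x, hxA, y, hyB, hZeq⟩
      · exact ⟨y, hyA, x, hxB, by rw [hZeq, Finset.pair_comm]⟩
      · exact absurd hExy (hBB x hxB y hyB hxy)
    · rintro ⟨a, ha, b, hb, rfl⟩
      exact hABe a ha b hb
  -- both sides have at least two vertices
  have hA2 : 2 ≤ A.card := by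
    obtain ⟨U, hU, hx0U⟩ := aux_exists_mem (hVdef ▸ hx0V)
    obtain ⟨a, ha, b, hb, rfl⟩ := (hmemS U).1 hU
    have hax0 : a ≠ x0 := by
      intro h
      subst h
      simp [Finset.mem_sdiff] at hx0U
    have := Finset.one_lt_card.2 ⟨a, ha, x0, hx0A, hax0⟩
    omega
  have hB2 : 2 ≤ B.card := by
    obtain ⟨U, hU, hy0U⟩ := aux_exists_mem (hVdef ▸ hy0V)
    obtain ⟨a, ha, b, hb, rfl⟩ := (hmemS U).1 hU
    have hby0 : b ≠ y0 := by
      intro h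
      subst h
      simp [Finset.mem_sdiff] at hy0U
    have := Finset.one_lt_card.2 ⟨b, hb, y0, hy0B, hby0⟩
    omega
  have hVunion : V = A ∪ B := by
    ext z
    simp only [Finset.mem_union]
    constructor
    · exact hsplit z
    · rintro (h | h)
      exacts [hAV z h, hBV z h]
  -- the copy case
  have hcopy : A.card = 2 ∨ B.card = 2 → IsCopyOfL k S := by
    rintro (hA | hB)
    · obtain ⟨x, y, hxy, hAeq⟩ := Finset.card_eq_two.1 hA
      have hxA : x ∈ A := hAeq ▸ Finset.mem_insert_self x {y}
      have hyA : y ∈ A := hAeq ▸ (by simp : y ∈ ({x, y} : Finset ℕ))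
      refine aux_copy k S hnodup B x y hxy (fun h => hdisj x hxA h)
        (fun h => hdisj y hyA h) (by omega) ?_ ?_
      · rw [← hVdef, hVunion, hAeq, Finset.union_comm]
      · intro Z
        rw [hmemS Z, ← hVdef]
        constructor
        · rintro ⟨a, ha, b, hb, rfl⟩
          rw [hAeq] at ha
          simp only [Finset.mem_insert, Finset.mem_singleton] at ha
          rcases ha with rfl | rfl
          · exact ⟨b, hb, Or.inl rfl⟩
          · exact ⟨b, hb, Or.inr rfl⟩
        · rintro ⟨b, hb, rfl | rfl⟩
          · exact ⟨x, hxA, b, hb, rfl⟩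
          · exact ⟨y, hyA, b, hb, rfl⟩
    · obtain ⟨x, y, hxy, hBeq⟩ := Finset.card_eq_two.1 hB
      have hxB : x ∈ B := hBeq ▸ Finset.mem_insert_self x {y}
      have hyB : y ∈ B := hBeq ▸ (by simp : y ∈ ({x, y} : Finset ℕ))
      refine aux_copy k S hnodup A x y hxy (fun h => hdisj x h hxB)
        (fun h => hdisj y h hyB) (by omega) ?_ ?_
      · rw [← hVdef, hVunion, hBeq]
      · intro Z
        rw [hmemS Z, ← hVdef]
        constructor
        · rintro ⟨a, ha, b, hb, rfl⟩
          rw [hBeq] at hb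
          simp only [Finset.mem_insert, Finset.mem_singleton] at hb
          rcases hb with rfl | rfl
          · exact ⟨a, ha, Or.inl (by rw [Finset.pair_comm])⟩
          · exact ⟨a, ha, Or.inr (by rw [Finset.pair_comm])⟩
        · rintro ⟨a, ha, rfl | rfl⟩
          · exact ⟨a, ha, x, hxB, by rw [Finset.pair_comm]⟩
          · exact ⟨a, ha, y, hyB, by rw [Finset.pair_comm]⟩
  constructor
  · intro hk2
    exact hcopy (by omega)
  · intro _
    by_cases hA3 : A.card = 2
    · exact Or.inr (hcopy (Or.inl hA3))
    · by_cases hB3 : B.card = 2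
      · exact Or.inr (hcopy (Or.inr hB3))
      · left
        have hA3' : 3 ≤ A.card := by omega
        have hB3' : 3 ≤ B.card := by omega
        refine ⟨hcard, ?_⟩
        intro u hu v hv huv
        have hAuv : (A \ {u, v}).Nonempty := by
          rw [← Finset.card_pos]
          have h1 := Finset.le_card_sdiff ({u, v} : Finset ℕ) A
          have h2 : ({u, v} : Finset ℕ).card ≤ 2 := Finset.card_insert_le u {v}
          omega
        have hBuv : (B \ {u, v}).Nonempty := by
          rw [← Finset.card_pos]
          have h1 := Finset.le_card_sdiff ({u, v} : Finset ℕ) B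
          have h2 : ({u, v} : Finset ℕ).card ≤ 2 := Finset.card_insert_le u {v}
          omega
        obtain ⟨a, ha⟩ := hAuv
        obtain ⟨b, hb⟩ := hBuv
        rw [Finset.mem_sdiff] at ha hb
        have hUS : V \ {a, b} ∈ S := (hmemS _).2 ⟨a, ha.1, b, hb.1, rfl⟩
        refine ⟨huv, V \ {a, b}, hUS, ?_, ?_⟩
        · refine Finset.mem_sdiff.2 ⟨hu, ?_⟩
          simp only [Finset.mem_insert, Finset.mem_singleton, not_or]
          constructor
          · intro h; exact ha.2 (by simp [← h])
          · intro h; exact hb.2 (by simp [← h])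
        · refine Finset.mem_sdiff.2 ⟨hv, ?_⟩
          simp only [Finset.mem_insert, Finset.mem_singleton, not_or]
          constructor
          · intro h; exact ha.2 (by simp [← h])
          · intro h; exact hb.2 (by simp [← h])
end
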